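/- Let 0 < q ≤ p < 1 and suppose I_p(x) ≥ I_p(q) + (−I_p'(q)/(2q))·((max(2q−x,0))² − q²) for all x ∈ [0,p]. Then for every symmetric measurable W : [0,1]² → [0,p] with t(K₃, W) ≤ q³, one has ∫∫ I_p(W(x,y)) dx dy ≥ I_p(q). -/

import Mathlib

open MeasureTheory Real

noncomputable section

def I01 : Set ℝ := Set.Icc 0 1

/-- Triangle density of a kernel `W`. -/
def tK3 (W : ℝ → ℝ → ℝ) : ℝ :=
  ∫ x in I01, ∫ y in I01, ∫ z in I01, W x y * W x z * W y z

/-- The relative entropy function `I_p`. -/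
def Ip (p x : ℝ) : ℝ := x * Real.log (x / p) + (1 - x) * Real.log ((1 - x) / (1 - p))

/-- The derivative of `I_p`. -/
def Ip' (p q : ℝ) : ℝ := Real.log (q / p) - Real.log ((1 - q) / (1 - p))

instance : IsProbabilityMeasure (volume.restrict I01) :=
  ⟨by simp [I01, Real.volume_Icc]⟩

variable {α : Type*} [MeasurableSpace α]

/-- bounded measurable implies integrable on finite measure -/
lemma integrable_of_bdd {μ : Measure α} [IsFiniteMeasure μ] {f : α → ℝ} {C : ℝ}
    (hf : AEStronglyMeasurable f μ) (hb : ∀ a, |f a| ≤ C) : Integrable f μ :=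
  Integrable.mono' (integrable_const C) hf (Filter.Eventually.of_forall fun a => by
    simpa [Real.norm_eq_abs] using hb a)

/-- Cauchy–Schwarz for nonneg bounded measurable functions -/
lemma cs_int {μ : Measure α} [IsFiniteMeasure μ] {f g : α → ℝ} {Cf Cg : ℝ}
    (hf : AEStronglyMeasurable f μ) (hg : AEStronglyMeasurable g μ)
    (hf0 : ∀ a, 0 ≤ f a) (hg0 : ∀ a, 0 ≤ g a)
    (hfb : ∀ a, f a ≤ Cf) (hgb : ∀ a, g a ≤ Cg) :
    ∫ a, f a * g a ∂μ ≤ Real.sqrt (∫ a, f a ^ 2 ∂μ) * Real.sqrt (∫ a, g a ^ 2 ∂μ) := by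
  have hconj : (2 : ℝ).HolderConjugate 2 := Real.holderConjugate_iff.mpr ⟨by norm_num, by norm_num⟩
  have hfm : MemLp f (ENNReal.ofReal 2) μ :=
    MemLp.of_bound hf Cf (Filter.Eventually.of_forall fun a => by
      rw [Real.norm_eq_abs, abs_of_nonneg (hf0 a)]; exact hfb a)
  have hgm : MemLp g (ENNReal.ofReal 2) μ :=
    MemLp.of_bound hg Cg (Filter.Eventually.of_forall fun a => by
      rw [Real.norm_eq_abs, abs_of_nonneg (hg0 a)]; exact hgb a)
  have h := integral_mul_le_Lp_mul_Lq_of_nonneg hconj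
    (Filter.Eventually.of_forall hf0) (Filter.Eventually.of_forall hg0) hfm hgm
  calc ∫ a, f a * g a ∂μ ≤ (∫ a, f a ^ (2:ℝ) ∂μ) ^ ((1:ℝ)/2) * (∫ a, g a ^ (2:ℝ) ∂μ) ^ ((1:ℝ)/2) := h
    _ = Real.sqrt (∫ a, f a ^ 2 ∂μ) * Real.sqrt (∫ a, g a ^ 2 ∂μ) := by
        rw [Real.sqrt_eq_rpow, Real.sqrt_eq_rpow]
        congr 2 <;> · exact integral_congr_ae (Filter.Eventually.of_forall fun a => Real.rpow_two _)

lemma abs_integral_le_of_bdd {μ : Measure α} [IsProbabilityMeasure μ] {f : α → ℝ} {C : ℝ}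
    (h : ∀ a, |f a| ≤ C) : |∫ a, f a ∂μ| ≤ C := by
  have := norm_integral_le_of_norm_le_const (μ := μ) (f := f) (C := C)
    (Filter.Eventually.of_forall fun a => by simpa [Real.norm_eq_abs] using h a)
  simpa [Real.norm_eq_abs, measure_univ] using this

section core

variable {μ : Measure ℝ} [IsProbabilityMeasure μ] {q : ℝ} {U : ℝ → ℝ → ℝ}


lemma key (hq : 0 < q) (hU : Measurable (Function.uncurry U))
    (hU0 : ∀ x y, 0 ≤ U x y) (hUb : ∀ x y, U x y ≤ 2*q)
    (hUs : ∀ x y, U x y = U y x)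
    (ht : ∫ x, ∫ y, ∫ z, (2*q - U x y) * (2*q - U x z) * (2*q - U y z) ∂μ ∂μ ∂μ ≤ q^3) :
    q^2 ≤ ∫ x, ∫ y, (U x y)^2 ∂μ ∂μ := by
  have hq2 : (0:ℝ) < 2*q := by linarith
  -- section measurability
  have hUx : ∀ x, Measurable (U x) := fun x => hU.comp (measurable_prodMk_left)
  have hUy : ∀ y, Measurable (fun x => U x y) := fun y => hU.comp (measurable_prodMk_right)
  have hUabs : ∀ x y, |U x y| ≤ 2*q := fun x y => abs_le.2 ⟨by linarith [hU0 x y], hUb x y⟩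
  have intU : ∀ x, Integrable (U x) μ := fun x =>
    integrable_of_bdd (hUx x).aestronglyMeasurable (fun y => hUabs x y)
  set g : ℝ → ℝ := fun x => ∫ y, U x y ∂μ with hgdef
  have hgSM : StronglyMeasurable g := hU.stronglyMeasurable.integral_prod_right
  have hg : Measurable g := hgSM.measurable
  have hg0 : ∀ x, 0 ≤ g x := fun x => integral_nonneg (fun y => hU0 x y)
  have hgb : ∀ x, g x ≤ 2*q := fun x => by
    have := abs_integral_le_of_bdd (μ := μ) (f := U x) (C := 2*q) (fun y => hUabs x y)
    exact (abs_le.1 this).2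
  have hgabs : ∀ x, |g x| ≤ 2*q := fun x => abs_le.2 ⟨by linarith [hg0 x], hgb x⟩
  have intg : Integrable g μ := integrable_of_bdd hg.aestronglyMeasurable hgabs
  have hgsym : ∀ y, ∫ x, U x y ∂μ = g y := fun y => by
    have : (fun x => U x y) = fun x => U y x := funext fun x => hUs x y
    rw [this]
  -- the kernel k
  set k : ℝ → ℝ → ℝ := fun x y => ∫ z, U x z * U y z ∂μ with hkdef
  have hkm : Measurable (fun w : (ℝ × ℝ) × ℝ => U w.1.1 w.2 * U w.1.2 w.2) :=
    (hU.comp ((measurable_fst.fst).prodMk measurable_snd)).mul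
      (hU.comp ((measurable_fst.snd).prodMk measurable_snd))
  have hkSM : StronglyMeasurable (Function.uncurry k) :=
    hkm.stronglyMeasurable.integral_prod_right'
  have hkxm : ∀ x, Measurable (k x) := fun x =>
    (hkSM.measurable).comp (measurable_prodMk_left)
  have hk0 : ∀ x y, 0 ≤ k x y := fun x y =>
    integral_nonneg (fun z => mul_nonneg (hU0 x z) (hU0 y z))
  have hkabs : ∀ x y, |k x y| ≤ (2*q)*(2*q) := fun x y =>
    abs_integral_le_of_bdd (fun z => by
      rw [abs_mul]
      exact mul_le_mul (hUabs x z) (hUabs y z) (abs_nonneg _) hq2.le)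
  have hkb : ∀ x y, k x y ≤ (2*q)*(2*q) := fun x y => (abs_le.1 (hkabs x y)).2
  have intUU : ∀ x y, Integrable (fun z => U x z * U y z) μ := fun x y =>
    integrable_of_bdd ((hUx x).mul (hUx y)).aestronglyMeasurable
      (fun z => by rw [abs_mul]; exact mul_le_mul (hUabs x z) (hUabs y z) (abs_nonneg _) hq2.le)
  -- swap lemma
  have swapU : ∀ (φ : ℝ → ℝ), Measurable φ → ∀ (Cφ : ℝ), (∀ a, |φ a| ≤ Cφ) →
      ∫ x, ∫ y, U x y * φ y ∂μ ∂μ = ∫ y, g y * φ y ∂μ := by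
    intro φ hφm Cφ hφb
    have hCφ : 0 ≤ Cφ := le_trans (abs_nonneg _) (hφb 0)
    have hint : Integrable (Function.uncurry fun x y => U x y * φ y) (μ.prod μ) := by
      apply integrable_of_bdd (C := (2*q)*Cφ)
      · exact (hU.mul (hφm.comp measurable_snd)).aestronglyMeasurable
      · intro a
        rw [Function.uncurry, abs_mul]
        exact mul_le_mul (hUabs _ _) (hφb _) (abs_nonneg _) hq2.le
    rw [integral_integral_swap hint]
    refine integral_congr_ae (Filter.Eventually.of_forall fun y => ?_)
    show (∫ x, U x y * φ y ∂μ) = g y * φ y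
    rw [integral_mul_const, hgsym y]
  -- main quantities
  set hh : ℝ → ℝ := fun x => ∫ y, (U x y)^2 ∂μ with hhdef
  set m : ℝ := ∫ x, g x ∂μ with hmdef
  set D : ℝ := ∫ x, (g x)^2 ∂μ with hDdef
  set s : ℝ := ∫ x, hh x ∂μ with hsdef
  have hU2m : Measurable (fun w : ℝ × ℝ => (U w.1 w.2)^2) := (hU.pow_const 2)
  have hhSM : StronglyMeasurable hh :=
    StronglyMeasurable.integral_prod_right (f := fun x y => (U x y)^2) hU2m.stronglyMeasurable
  have hh0 : ∀ x, 0 ≤ hh x := fun x => integral_nonneg (fun y => sq_nonneg _)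
  have hhabs : ∀ x, |hh x| ≤ (2*q)*(2*q) := fun x =>
    abs_integral_le_of_bdd (fun y => by
      rw [abs_pow, pow_two]
      exact mul_le_mul (hUabs x y) (hUabs x y) (abs_nonneg _) hq2.le)
  have intU2 : ∀ x, Integrable (fun y => (U x y)^2) μ := fun x =>
    integrable_of_bdd ((hUx x).pow_const 2).aestronglyMeasurable
      (fun y => by rw [abs_pow, pow_two]
                   exact mul_le_mul (hUabs x y) (hUabs x y) (abs_nonneg _) hq2.le)
  have inth : Integrable hh μ := integrable_of_bdd hhSM.aestronglyMeasurable hhabs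
  have hs0 : 0 ≤ s := integral_nonneg hh0
  -- pointwise Cauchy-Schwarz: g x ^ 2 ≤ hh x
  have hgx2 : ∀ x, (g x)^2 ≤ hh x := by
    intro x
    have h1 : g x = ∫ y, U x y * 1 ∂μ := by simp only [mul_one]; rfl
    have h2 : g x ≤ Real.sqrt (hh x) * Real.sqrt (∫ (y:ℝ), (1:ℝ)^2 ∂μ) := by
      rw [h1]
      exact cs_int (hUx x).aestronglyMeasurable aestronglyMeasurable_const
        (hU0 x) (fun _ => zero_le_one) (hUb x) (fun _ => le_refl 1)
    have h3 : Real.sqrt (∫ (y:ℝ), (1:ℝ)^2 ∂μ) = 1 := by simp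
    rw [h3, mul_one] at h2
    calc (g x)^2 ≤ (Real.sqrt (hh x))^2 := by
          apply pow_le_pow_left₀ (hg0 x) h2
      _ = hh x := Real.sq_sqrt (hh0 x)
  have hD_le_s : D ≤ s := integral_mono
    (integrable_of_bdd (hg.pow_const 2).aestronglyMeasurable
      (C := (2*q)*(2*q)) (fun x => by
        rw [abs_pow, pow_two]
        exact mul_le_mul (hgabs x) (hgabs x) (abs_nonneg _) hq2.le)) inth hgx2
  have hD0 : 0 ≤ D := integral_nonneg fun x => sq_nonneg _
  have hm0 : 0 ≤ m := integral_nonneg hg0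
  -- m ≤ sqrt D
  have hm_le : m ≤ Real.sqrt D := by
    have h1 : m = ∫ x, g x * 1 ∂μ := by simp only [mul_one]; rfl
    have h2 : ∫ x, g x * (fun _ => (1:ℝ)) x ∂μ ≤
        Real.sqrt (∫ x, g x ^ 2 ∂μ) * Real.sqrt (∫ x, ((fun _ => (1:ℝ)) x) ^ 2 ∂μ) :=
      cs_int hg.aestronglyMeasurable aestronglyMeasurable_const
        hg0 (fun (_:ℝ) => zero_le_one) hgb (fun (_:ℝ) => le_refl 1)
    have h3 : Real.sqrt (∫ (y:ℝ), (1:ℝ)^2 ∂μ) = 1 := by simp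
    rw [h3, mul_one] at h2
    rw [h1]; exact h2
  -- κ, ρ, τ
  set κ : ℝ → ℝ := fun x => ∫ y, k x y ∂μ with hκdef
  set ρ : ℝ → ℝ := fun x => ∫ y, U x y * g y ∂μ with hρdef
  set τ : ℝ → ℝ := fun x => ∫ y, U x y * k x y ∂μ with hτdef
  have hκSM : StronglyMeasurable κ := hkSM.integral_prod_right'
  have hUgm : Measurable (fun w : ℝ × ℝ => U w.1 w.2 * g w.2) :=
    hU.mul (hg.comp measurable_snd)
  have hρSM : StronglyMeasurable ρ :=
    StronglyMeasurable.integral_prod_right (f := fun x y => U x y * g y) hUgm.stronglyMeasurable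
  have hUkm : Measurable (fun w : ℝ × ℝ => U w.1 w.2 * k w.1 w.2) := hU.mul hkSM.measurable
  have hτSM : StronglyMeasurable τ :=
    StronglyMeasurable.integral_prod_right (f := fun x y => U x y * k x y) hUkm.stronglyMeasurable
  have hκabs : ∀ x, |κ x| ≤ (2*q)*(2*q) := fun x => abs_integral_le_of_bdd (fun y => hkabs x y)
  have hρabs : ∀ x, |ρ x| ≤ (2*q)*(2*q) := fun x => abs_integral_le_of_bdd (fun y => by
    rw [abs_mul]; exact mul_le_mul (hUabs x y) (hgabs y) (abs_nonneg _) hq2.le)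
  have hτabs : ∀ x, |τ x| ≤ (2*q)*((2*q)*(2*q)) := fun x => abs_integral_le_of_bdd (fun y => by
    rw [abs_mul]
    exact mul_le_mul (hUabs x y) (hkabs x y) (abs_nonneg _) hq2.le)
  -- inner integral identity
  have inner_eq : ∀ x y, (∫ z, (2*q - U x y) * (2*q - U x z) * (2*q - U y z) ∂μ)
      = (2*q - U x y) * (4*q^2 - 2*q * g x - 2*q * g y + k x y) := by
    intro x y
    have e1 : (fun z => (2*q - U x y) * (2*q - U x z) * (2*q - U y z))
        = fun z => (2*q - U x y) * ((2*q - U x z) * (2*q - U y z)) :=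
      funext fun z => mul_assoc _ _ _
    rw [e1, integral_const_mul]
    congr 1
    have e2 : (fun z => (2*q - U x z) * (2*q - U y z))
        = fun z => (((4*q^2 - 2*q * U x z) - 2*q * U y z) + U x z * U y z) :=
      funext fun z => by ring
    have ia1 : Integrable (fun z => (4*q^2 : ℝ) - 2*q * U x z) μ :=
      (integrable_const _).sub ((intU x).const_mul _)
    have ia2 : Integrable (fun z => ((4*q^2 : ℝ) - 2*q * U x z) - 2*q * U y z) μ :=
      ia1.sub ((intU y).const_mul _)
    rw [e2, integral_add ia2 (intUU x y), integral_sub ia1 ((intU y).const_mul _),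
      integral_sub (integrable_const _) ((intU x).const_mul _),
      integral_const_mul, integral_const_mul]
    simp only [integral_const, probReal_univ, smul_eq_mul, one_mul]
    have e6 : (∫ z, U x z ∂μ) = g x := rfl
    have e7 : (∫ z, U y z ∂μ) = g y := rfl
    have e12 : (∫ z, U x z * U y z ∂μ) = k x y := rfl
    rw [e6, integral_const_mul, e7, e12]
  -- integrability in y of pieces (for fixed x)
  have int_gy : Integrable (fun y => g y) μ := intg
  have int_k : ∀ x, Integrable (k x) μ := fun x =>
    integrable_of_bdd (hkxm x).aestronglyMeasurable (fun y => hkabs x y)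
  have int_ug : ∀ x, Integrable (fun y => U x y * g y) μ := fun x =>
    integrable_of_bdd ((hUx x).mul hg).aestronglyMeasurable (C := (2*q)*(2*q)) (fun y => by
      rw [abs_mul]; exact mul_le_mul (hUabs x y) (hgabs y) (abs_nonneg _) hq2.le)
  have int_uk : ∀ x, Integrable (fun y => U x y * k x y) μ := fun x =>
    integrable_of_bdd ((hUx x).mul (hkxm x)).aestronglyMeasurable
      (C := (2*q)*((2*q)*(2*q))) (fun y => by
      rw [abs_mul]; exact mul_le_mul (hUabs x y) (hkabs x y) (abs_nonneg _) hq2.le)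
  -- middle integral identity
  have mid_eq : ∀ x, (∫ y, (2*q - U x y) * (4*q^2 - 2*q * g x - 2*q * g y + k x y) ∂μ)
      = 8*q^3 - 8*q^2 * g x + 2*q*(g x)^2 - 4*q^2 * m + 2*q * κ x + 2*q * ρ x - τ x := by
    intro x
    have e3 : (fun y => (2*q - U x y) * (4*q^2 - 2*q * g x - 2*q * g y + k x y))
        = fun y => ((((((8*q^3 - 4*q^2*g x) - (4*q^2 - 2*q*g x) * U x y) - 4*q^2 * g y)
            + 2*q * k x y) + 2*q * (U x y * g y)) - U x y * k x y) :=
      funext fun y => by ring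
    have i1 : Integrable (fun y => (8*q^3 - 4*q^2*g x) - (4*q^2 - 2*q*g x) * U x y) μ :=
      (integrable_const _).sub ((intU x).const_mul _)
    have i2 : Integrable (fun y => ((8*q^3 - 4*q^2*g x) - (4*q^2 - 2*q*g x) * U x y)
        - 4*q^2 * g y) μ := i1.sub (intg.const_mul _)
    have i3 : Integrable (fun y => (((8*q^3 - 4*q^2*g x) - (4*q^2 - 2*q*g x) * U x y)
        - 4*q^2 * g y) + 2*q * k x y) μ := i2.add ((int_k x).const_mul (2*q))
    have i4 : Integrable (fun y => ((((8*q^3 - 4*q^2*g x) - (4*q^2 - 2*q*g x) * U x y)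
        - 4*q^2 * g y) + 2*q * k x y) + 2*q * (U x y * g y)) μ :=
      i3.add ((int_ug x).const_mul (2*q))
    rw [e3, integral_sub i4 (int_uk x), integral_add i3 ((int_ug x).const_mul (2*q)),
      integral_add i2 ((int_k x).const_mul (2*q)), integral_sub i1 (intg.const_mul _),
      integral_sub (integrable_const _) ((intU x).const_mul _),
      integral_const_mul, integral_const_mul, integral_const_mul, integral_const_mul]
    have : (∫ y, U x y ∂μ) = g x := rfl
    rw [this]
    simp only [integral_const, probReal_univ, smul_eq_mul, one_mul]
    have e8 : (∫ y, k x y ∂μ) = κ x := rfl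
    have e9 : (∫ y, U x y * g y ∂μ) = ρ x := rfl
    have e10 : (∫ y, U x y * k x y ∂μ) = τ x := rfl
    have e11 : (∫ y, g y ∂μ) = m := rfl
    rw [e8, e9, e10, e11]
    ring
  -- integrability in x of pieces
  have int_gx2 : Integrable (fun x => (g x)^2) μ :=
    integrable_of_bdd (hg.pow_const 2).aestronglyMeasurable (C := (2*q)*(2*q)) (fun x => by
      rw [abs_pow, pow_two]
      exact mul_le_mul (hgabs x) (hgabs x) (abs_nonneg _) hq2.le)
  have int_κ : Integrable κ μ := integrable_of_bdd hκSM.aestronglyMeasurable hκabs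
  have int_ρ : Integrable ρ μ := integrable_of_bdd hρSM.aestronglyMeasurable hρabs
  have int_τ : Integrable τ μ := integrable_of_bdd hτSM.aestronglyMeasurable hτabs
  -- outer expansion
  set t3U : ℝ := ∫ x, τ x ∂μ with ht3def
  set K : ℝ := ∫ x, κ x ∂μ with hKdef
  set R : ℝ := ∫ x, ρ x ∂μ with hRdef
  have outer_eq : (∫ x, ∫ y, ∫ z, (2*q - U x y) * (2*q - U x z) * (2*q - U y z) ∂μ ∂μ ∂μ)
      = 8*q^3 - 12*q^2*m + 2*q*D + 2*q*K + 2*q*R - t3U := by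
    have e4 : (fun x => ∫ y, ∫ z, (2*q - U x y) * (2*q - U x z) * (2*q - U y z) ∂μ ∂μ)
        = fun x => ((((((8*q^3 - 4*q^2*m) - 8*q^2 * g x) + 2*q*(g x)^2)
            + 2*q * κ x) + 2*q * ρ x) - τ x) := by
      funext x
      rw [show (∫ y, ∫ z, (2*q - U x y) * (2*q - U x z) * (2*q - U y z) ∂μ ∂μ)
          = ∫ y, (2*q - U x y) * (4*q^2 - 2*q * g x - 2*q * g y + k x y) ∂μ from
        integral_congr_ae (Filter.Eventually.of_forall fun y => inner_eq x y), mid_eq x]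
      ring
    have j1 : Integrable (fun x => (8*q^3 - 4*q^2*m) - 8*q^2 * g x) μ :=
      (integrable_const _).sub (intg.const_mul _)
    have j2 : Integrable (fun x => ((8*q^3 - 4*q^2*m) - 8*q^2 * g x) + 2*q*(g x)^2) μ :=
      j1.add (int_gx2.const_mul (2*q))
    have j3 : Integrable (fun x => (((8*q^3 - 4*q^2*m) - 8*q^2 * g x) + 2*q*(g x)^2)
        + 2*q * κ x) μ := j2.add (int_κ.const_mul (2*q))
    have j4 : Integrable (fun x => ((((8*q^3 - 4*q^2*m) - 8*q^2 * g x) + 2*q*(g x)^2)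
        + 2*q * κ x) + 2*q * ρ x) μ := j3.add (int_ρ.const_mul (2*q))
    rw [e4, integral_sub j4 int_τ, integral_add j3 (int_ρ.const_mul (2*q)),
      integral_add j2 (int_κ.const_mul (2*q)), integral_add j1 (int_gx2.const_mul (2*q)),
      integral_sub (integrable_const _) (intg.const_mul _),
      integral_const_mul, integral_const_mul, integral_const_mul, integral_const_mul]
    simp only [integral_const, probReal_univ, smul_eq_mul, one_mul]
    rw [← hmdef, ← hDdef, ← hKdef, ← hRdef, ← ht3def]
    ring
  -- R = D
  have hR_eq : R = D := by
    have := swapU g hg (2*q) hgabs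
    rw [hRdef]
    simp only [hρdef]
    rw [this]
    refine integral_congr_ae (Filter.Eventually.of_forall fun y => ?_)
    ring
  -- K = D
  have hκ1 : ∀ x, κ x = ∫ z, g z * U x z ∂μ := by
    intro x
    have e5 : ∀ y, k x y = ∫ z, U y z * U x z ∂μ := fun y =>
      integral_congr_ae (Filter.Eventually.of_forall fun z => mul_comm _ _)
    have : κ x = ∫ y, ∫ z, U y z * U x z ∂μ ∂μ :=
      integral_congr_ae (Filter.Eventually.of_forall fun y => e5 y)
    rw [this]
    exact swapU (fun z => U x z) (hUx x) (2*q) (fun z => hUabs x z)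
  have hK_eq : K = D := by
    have : K = ∫ x, ∫ z, U x z * g z ∂μ ∂μ := by
      rw [hKdef]
      refine integral_congr_ae (Filter.Eventually.of_forall fun x => ?_)
      rw [hκ1 x]
      exact integral_congr_ae (Filter.Eventually.of_forall fun z => mul_comm _ _)
    rw [this, swapU g hg (2*q) hgabs]
    refine integral_congr_ae (Filter.Eventually.of_forall fun y => ?_)
    ring
  -- t3U ≤ sqrt s * s
  have ht3U : t3U ≤ Real.sqrt s * s := by
    have hintUk : Integrable (Function.uncurry fun x y => U x y * k x y) (μ.prod μ) :=
      integrable_of_bdd hUkm.aestronglyMeasurable (C := (2*q)*((2*q)*(2*q))) (fun w => by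
        rw [Function.uncurry, abs_mul]
        exact mul_le_mul (hUabs _ _) (hkabs _ _) (abs_nonneg _) hq2.le)
    have h1 : t3U = ∫ w, U w.1 w.2 * k w.1 w.2 ∂(μ.prod μ) := by
      rw [ht3def]
      simp only [hτdef]
      exact (integral_integral hintUk)
    have h2 : s = ∫ w, (U w.1 w.2)^2 ∂(μ.prod μ) := by
      rw [hsdef]
      simp only [hhdef]
      exact (integral_integral (integrable_of_bdd hU2m.aestronglyMeasurable
        (C := (2*q)*(2*q)) (fun w => by
          simp only [Function.uncurry]
          rw [abs_pow, pow_two]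
          exact mul_le_mul (hUabs _ _) (hUabs _ _) (abs_nonneg _) hq2.le)))
    have hcs : (∫ w, U w.1 w.2 * k w.1 w.2 ∂(μ.prod μ))
        ≤ Real.sqrt (∫ w, (U w.1 w.2)^2 ∂(μ.prod μ))
          * Real.sqrt (∫ w, (k w.1 w.2)^2 ∂(μ.prod μ)) :=
      cs_int hU.aestronglyMeasurable hkSM.measurable.aestronglyMeasurable
        (fun w => hU0 _ _) (fun w => hk0 _ _) (fun w => hUb _ _) (fun w => hkb _ _)
    have hk2 : (∫ w, (k w.1 w.2)^2 ∂(μ.prod μ)) ≤ s^2 := by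
      have hpt : ∀ w : ℝ × ℝ, (k w.1 w.2)^2 ≤ hh w.1 * hh w.2 := by
        rintro ⟨x, y⟩
        have hcs2 : k x y ≤ Real.sqrt (hh x) * Real.sqrt (hh y) :=
          cs_int (hUx x).aestronglyMeasurable (hUx y).aestronglyMeasurable
            (hU0 x) (hU0 y) (hUb x) (hUb y)
        calc (k x y)^2 ≤ (Real.sqrt (hh x) * Real.sqrt (hh y))^2 :=
              pow_le_pow_left₀ (hk0 x y) hcs2 2
          _ = hh x * hh y := by
              rw [mul_pow, Real.sq_sqrt (hh0 x), Real.sq_sqrt (hh0 y)]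
      have hint1 : Integrable (fun w : ℝ × ℝ => (k w.1 w.2)^2) (μ.prod μ) :=
        integrable_of_bdd (hkSM.measurable.pow_const 2).aestronglyMeasurable
          (C := ((2*q)*(2*q))^2) (fun w => by
            rw [abs_pow]
            exact pow_le_pow_left₀ (abs_nonneg _) (hkabs _ _) 2)
      have hint2 : Integrable (fun w : ℝ × ℝ => hh w.1 * hh w.2) (μ.prod μ) :=
        integrable_of_bdd ((hhSM.measurable.comp measurable_fst).mul
          (hhSM.measurable.comp measurable_snd)).aestronglyMeasurable
          (C := ((2*q)*(2*q))*((2*q)*(2*q))) (fun w => by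
            rw [abs_mul]
            exact mul_le_mul (hhabs _) (hhabs _) (abs_nonneg _)
              (by positivity))
      calc (∫ w, (k w.1 w.2)^2 ∂(μ.prod μ)) ≤ ∫ w : ℝ × ℝ, hh w.1 * hh w.2 ∂(μ.prod μ) :=
            integral_mono hint1 hint2 hpt
        _ = s * s := by rw [integral_prod_mul (f := hh) (g := hh)]
        _ = s^2 := (sq s).symm
    calc t3U ≤ Real.sqrt (∫ w, (U w.1 w.2)^2 ∂(μ.prod μ))
          * Real.sqrt (∫ w, (k w.1 w.2)^2 ∂(μ.prod μ)) := by rw [h1]; exact hcs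
      _ ≤ Real.sqrt s * Real.sqrt (s^2) := by
          apply mul_le_mul
          · rw [h2]
          · exact Real.sqrt_le_sqrt hk2
          · exact Real.sqrt_nonneg _
          · exact Real.sqrt_nonneg _
      _ = Real.sqrt s * s := by rw [Real.sqrt_sq hs0]
  -- final arithmetic
  have hT : 8*q^3 - 12*q^2*m + 6*q*D - t3U ≤ q^3 := by
    calc 8*q^3 - 12*q^2*m + 6*q*D - t3U
        = 8*q^3 - 12*q^2*m + 2*q*D + 2*q*K + 2*q*R - t3U := by rw [hR_eq, hK_eq]; ring
      _ ≤ q^3 := by rw [← outer_eq]; exact ht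
  by_contra hcon
  push_neg at hcon
  -- hcon : ∫∫ U^2 < q^2, i.e. s < q^2
  have hs_lt : s < q^2 := hcon
  have hr : Real.sqrt s < q := by
    have := Real.sqrt_lt_sqrt hs0 hs_lt
    rwa [Real.sqrt_sq hq.le] at this
  have hmr : m ≤ Real.sqrt s := le_trans hm_le (Real.sqrt_le_sqrt hD_le_s)
  have hDm : m^2 ≤ D := by
    calc m^2 ≤ (Real.sqrt D)^2 := pow_le_pow_left₀ hm0 hm_le 2
      _ = D := Real.sq_sqrt hD0
  have hr3 : (Real.sqrt s) * s < q^3 := by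
    have h1 : Real.sqrt s * s = (Real.sqrt s)^3 := by
      rw [show ((Real.sqrt s)^3) = Real.sqrt s * (Real.sqrt s)^2 by ring, Real.sq_sqrt hs0]
    rw [h1]
    exact pow_lt_pow_left₀ hr (Real.sqrt_nonneg _) (by norm_num)
  have hmq : m < q := lt_of_le_of_lt hmr hr
  nlinarith [mul_nonneg hq.le (sq_nonneg (q - m)), hT, ht3U, hDm]


lemma trip_meas {F : ℝ → ℝ → ℝ} (hF : Measurable (Function.uncurry F)) :
    Measurable (fun w : (ℝ × ℝ) × ℝ => F w.1.1 w.1.2 * F w.1.1 w.2 * F w.1.2 w.2) :=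
  ((hF.comp ((measurable_fst.fst).prodMk measurable_fst.snd)).mul
    (hF.comp ((measurable_fst.fst).prodMk measurable_snd))).mul
    (hF.comp ((measurable_fst.snd).prodMk measurable_snd))

lemma iter3_mono {A B : ℝ → ℝ → ℝ} {C : ℝ}
    (hA : Measurable (Function.uncurry A)) (hB : Measurable (Function.uncurry B))
    (hA0 : ∀ x y, 0 ≤ A x y) (hAB : ∀ x y, A x y ≤ B x y) (hBb : ∀ x y, B x y ≤ C) :
    (∫ x, ∫ y, ∫ z, A x y * A x z * A y z ∂μ ∂μ ∂μ)
      ≤ ∫ x, ∫ y, ∫ z, B x y * B x z * B y z ∂μ ∂μ ∂μ := by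
  have hC0 : 0 ≤ C := le_trans (hA0 0 0) (le_trans (hAB 0 0) (hBb 0 0))
  have hB0 : ∀ x y, 0 ≤ B x y := fun x y => le_trans (hA0 x y) (hAB x y)
  have hAb : ∀ x y, A x y ≤ C := fun x y => le_trans (hAB x y) (hBb x y)
  have habs : ∀ (F : ℝ → ℝ → ℝ), (∀ x y, 0 ≤ F x y) → (∀ x y, F x y ≤ C) →
      ∀ x y z, |F x y * F x z * F y z| ≤ C*C*C := by
    intro F h0 hb x y z
    rw [abs_mul, abs_mul]
    have h1 : ∀ a b : ℝ, |F a b| ≤ C := fun a b => abs_le.2 ⟨by linarith [h0 a b], hb a b⟩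
    exact mul_le_mul (mul_le_mul (h1 x y) (h1 x z) (abs_nonneg _)
      (le_trans (abs_nonneg _) (h1 x y))) (h1 y z) (abs_nonneg _)
      (mul_nonneg (le_trans (abs_nonneg _) (h1 x y)) (le_trans (abs_nonneg _) (h1 x z)))
  have hint : ∀ (F : ℝ → ℝ → ℝ), Measurable (Function.uncurry F) → (∀ x y, 0 ≤ F x y) →
      (∀ x y, F x y ≤ C) → ∀ x y, Integrable (fun z => F x y * F x z * F y z) μ := by
    intro F hF h0 hb x y
    exact integrable_of_bdd (C := C*C*C)
      ((trip_meas hF).comp (measurable_prodMk_left (x := (x,y)))).aestronglyMeasurable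
      (fun z => habs F h0 hb x y z)
  have hJSM : ∀ (F : ℝ → ℝ → ℝ), Measurable (Function.uncurry F) →
      StronglyMeasurable (fun w : ℝ × ℝ => ∫ z, F w.1 w.2 * F w.1 z * F w.2 z ∂μ) := by
    intro F hF
    exact (trip_meas hF).stronglyMeasurable.integral_prod_right'
  have hMint : ∀ (F : ℝ → ℝ → ℝ), Measurable (Function.uncurry F) → (∀ x y, 0 ≤ F x y) →
      (∀ x y, F x y ≤ C) → ∀ x,
      Integrable (fun y => ∫ z, F x y * F x z * F y z ∂μ) μ := by
    intro F hF h0 hb x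
    refine integrable_of_bdd (C := C*C*C)
      (((hJSM F hF).measurable.comp (measurable_prodMk_left (x := x)))).aestronglyMeasurable
      (fun y => abs_integral_le_of_bdd (fun z => habs F h0 hb x y z))
  refine integral_mono ?_ ?_ ?_
  · exact integrable_of_bdd (C := C*C*C)
      ((hJSM A hA).integral_prod_right').measurable.aestronglyMeasurable
      (fun x => abs_integral_le_of_bdd
        (fun y => abs_integral_le_of_bdd (fun z => habs A hA0 hAb x y z)))
  · exact integrable_of_bdd (C := C*C*C)
      ((hJSM B hB).integral_prod_right').measurable.aestronglyMeasurable
      (fun x => abs_integral_le_of_bdd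
        (fun y => abs_integral_le_of_bdd (fun z => habs B hB0 hBb x y z)))
  · intro x
    refine integral_mono (hMint A hA hA0 hAb x) (hMint B hB hB0 hBb x) (fun y => ?_)
    refine integral_mono (hint A hA hA0 hAb x y) (hint B hB hB0 hBb x y) (fun z => ?_)
    exact mul_le_mul (mul_le_mul (hAB x y) (hAB x z) (hA0 x z)
      (le_trans (hA0 x y) (hAB x y))) (hAB y z) (hA0 y z)
      (mul_nonneg (le_trans (hA0 x y) (hAB x y)) (le_trans (hA0 x z) (hAB x z)))

end core

lemma Ip_measurable (p : ℝ) : Measurable (Ip p) := by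
  unfold Ip
  exact (measurable_id.mul (Real.measurable_log.comp (measurable_id.div_const p))).add
    ((measurable_const.sub measurable_id).mul
      (Real.measurable_log.comp ((measurable_const.sub measurable_id).div_const (1-p))))

lemma Ip_bound {p x : ℝ} (hp0 : 0 < p) (hp1 : p < 1) (hx : x ∈ Set.Icc 0 p) :
    |Ip p x| ≤ p - Real.log (1 - p) := by
  obtain ⟨hx0, hxp⟩ := hx
  have h1p : (0:ℝ) < 1 - p := by linarith
  have h1x : (0:ℝ) < 1 - x := by linarith
  have ht1 : |x * Real.log (x / p)| ≤ p := by
    rcases eq_or_lt_of_le hx0 with h | h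
    · simp [← h]; exact hp0.le
    · have hd : 0 < p / x := div_pos hp0 h
      have hlog : Real.log (x / p) ≤ 0 :=
        Real.log_nonpos (by positivity) ((div_le_one hp0).2 hxp)
      have hneg : -Real.log (x / p) = Real.log (p / x) := by
        rw [← Real.log_inv, inv_div]
      have hle : Real.log (p / x) ≤ p / x - 1 := Real.log_le_sub_one_of_pos hd
      have : x * Real.log (p / x) ≤ p - x := by
        have := mul_le_mul_of_nonneg_left hle h.le
        calc x * Real.log (p / x) ≤ x * (p / x - 1) := this
          _ = p - x := by field_simp
      rw [abs_mul, abs_of_nonneg hx0, abs_of_nonpos hlog]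
      calc x * -Real.log (x/p) = x * Real.log (p / x) := by rw [hneg]
        _ ≤ p - x := this
        _ ≤ p := by linarith
  have ht2 : |(1 - x) * Real.log ((1 - x) / (1 - p))| ≤ -Real.log (1 - p) := by
    have hr1 : (1:ℝ) ≤ (1 - x) / (1 - p) := (le_div_iff₀ h1p).2 (by linarith)
    have hlog0 : 0 ≤ Real.log ((1 - x) / (1 - p)) := Real.log_nonneg hr1
    have hrb : (1 - x) / (1 - p) ≤ 1 / (1 - p) :=
      div_le_div_of_nonneg_right (by linarith) h1p.le
    have hlogb : Real.log ((1 - x) / (1 - p)) ≤ -Real.log (1 - p) := by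
      rw [← Real.log_inv, ← one_div]
      exact (Real.log_le_log_iff (by positivity) (by positivity)).2 hrb
    rw [abs_mul, abs_of_nonneg h1x.le, abs_of_nonneg hlog0]
    calc (1 - x) * Real.log ((1 - x) / (1 - p)) ≤ Real.log ((1 - x) / (1 - p)) :=
          mul_le_of_le_one_left hlog0 (by linarith)
      _ ≤ -Real.log (1 - p) := hlogb
  calc |Ip p x| ≤ |x * Real.log (x / p)| + |(1 - x) * Real.log ((1 - x) / (1 - p))| :=
        abs_add_le _ _
    _ ≤ p + -Real.log (1 - p) := add_le_add ht1 ht2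
    _ = p - Real.log (1 - p) := by ring

theorem stmt_5 (p q : ℝ) (hq : 0 < q) (hqp : q ≤ p) (hp : p < 1)
    (htangent : ∀ x ∈ Set.Icc (0 : ℝ) p,
      Ip p x ≥ Ip p q + (-Ip' p q / (2 * q)) * ((max (2 * q - x) 0) ^ 2 - q ^ 2))
    (W : ℝ → ℝ → ℝ)
    (hrange : ∀ x y, W x y ∈ Set.Icc (0 : ℝ) p)
    (hsymm : ∀ x y, W x y = W y x)
    (hmeas : Measurable (Function.uncurry W))
    (ht : tK3 W ≤ q ^ 3) :
    (∫ x in I01, ∫ y in I01, Ip p (W x y)) ≥ Ip p q := by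
  have hp0 : 0 < p := lt_of_lt_of_le hq hqp
  have hq2 : (0:ℝ) < 2*q := by linarith
  have hW0 : ∀ x y, 0 ≤ W x y := fun x y => (hrange x y).1
  have hWp : ∀ x y, W x y ≤ p := fun x y => (hrange x y).2
  set V : ℝ → ℝ → ℝ := fun x y => min (W x y) (2*q) with hVdef
  set U : ℝ → ℝ → ℝ := fun x y => max (2*q - W x y) 0 with hUdef
  have hUV : ∀ x y, 2*q - U x y = V x y := by
    intro x y
    simp only [hUdef, hVdef]
    rcases le_total (W x y) (2*q) with h | h
    · rw [max_eq_left (by linarith), min_eq_left h]; ring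
    · rw [max_eq_right (by linarith), min_eq_right h]; ring
  have hVm : Measurable (Function.uncurry V) := by
    have : Function.uncurry V = fun w => min (Function.uncurry W w) (2*q) := rfl
    rw [this]; exact hmeas.min measurable_const
  have hUm : Measurable (Function.uncurry U) := by
    have : Function.uncurry U = fun w => max (2*q - Function.uncurry W w) 0 := rfl
    rw [this]; exact (measurable_const.sub hmeas).max measurable_const
  have hU0 : ∀ x y, 0 ≤ U x y := fun x y => le_max_right _ _
  have hUb : ∀ x y, U x y ≤ 2*q := fun x y =>
    max_le (by linarith [hW0 x y]) hq2.le
  have hUabs : ∀ x y, |U x y| ≤ 2*q := fun x y => abs_le.2 ⟨by linarith [hU0 x y], hUb x y⟩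
  have hUs : ∀ x y, U x y = U y x := by
    intro x y; simp only [hUdef]; rw [hsymm x y]
  have hV0 : ∀ x y, 0 ≤ V x y := fun x y => le_min (hW0 x y) hq2.le
  have hVW : ∀ x y, V x y ≤ W x y := fun x y => min_le_left _ _
  -- triangle counts
  unfold tK3 at ht
  have htV : (∫ x in I01, ∫ y in I01, ∫ z in I01, V x y * V x z * V y z) ≤ q^3 :=
    le_trans (iter3_mono hVm hmeas hV0 hVW hWp) ht
  have htU : (∫ x in I01, ∫ y in I01, ∫ z in I01,
      (2*q - U x y) * (2*q - U x z) * (2*q - U y z)) ≤ q^3 := by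
    simp only [hUV]; exact htV
  have hkey : q^2 ≤ ∫ x in I01, ∫ y in I01, (U x y)^2 :=
    key hq hUm hU0 hUb hUs htU
  -- tangent line
  set c : ℝ := -Ip' p q / (2*q) with hcdef
  have hIp'le : Ip' p q ≤ 0 := by
    unfold Ip'
    have h1 : Real.log (q/p) ≤ 0 := Real.log_nonpos (by positivity) ((div_le_one hp0).2 hqp)
    have h2 : 0 ≤ Real.log ((1-q)/(1-p)) :=
      Real.log_nonneg ((le_div_iff₀ (by linarith)).2 (by linarith))
    linarith
  have hc : 0 ≤ c := div_nonneg (by linarith) hq2.le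
  set B : ℝ := p - Real.log (1-p) with hBdef
  have htang : ∀ x y, Ip p q + c * ((U x y)^2 - q^2) ≤ Ip p (W x y) := by
    intro x y
    have h := htangent (W x y) ⟨hW0 x y, hWp x y⟩
    simp only [hUdef, hcdef]
    exact h
  have hImeas : Measurable (fun w : ℝ×ℝ => Ip p (W w.1 w.2)) := (Ip_measurable p).comp hmeas
  have hIb : ∀ x y, |Ip p (W x y)| ≤ B := fun x y => Ip_bound hp0 hp ⟨hW0 x y, hWp x y⟩
  have hU2m : Measurable (fun w : ℝ×ℝ => (U w.1 w.2)^2) := hUm.pow_const 2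
  have hU2abs : ∀ x y, |(U x y)^2| ≤ (2*q)*(2*q) := fun x y => by
    rw [abs_pow, pow_two]
    exact mul_le_mul (hUabs x y) (hUabs x y) (abs_nonneg _) hq2.le
  have inner_mono : ∀ x, (Ip p q - c*q^2) + c * (∫ y in I01, (U x y)^2)
      ≤ ∫ y in I01, Ip p (W x y) := by
    intro x
    have iU2 : Integrable (fun y => (U x y)^2) (volume.restrict I01) :=
      integrable_of_bdd ((hU2m.comp measurable_prodMk_left)).aestronglyMeasurable
        (fun y => hU2abs x y)
    have i1 : Integrable (fun y => (Ip p q - c*q^2) + c * (U x y)^2) (volume.restrict I01) :=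
      (integrable_const _).add (iU2.const_mul c)
    have i2 : Integrable (fun y => Ip p (W x y)) (volume.restrict I01) :=
      integrable_of_bdd (hImeas.comp measurable_prodMk_left).aestronglyMeasurable
        (fun y => hIb x y)
    have h3 := integral_mono i1 i2 (fun y => by have := htang x y; linarith)
    rwa [integral_add (integrable_const _) (iU2.const_mul c), integral_const,
      integral_const_mul, probReal_univ, one_smul] at h3
  have hhSM : StronglyMeasurable (fun x => ∫ y in I01, (U x y)^2) :=
    StronglyMeasurable.integral_prod_right (f := fun x y => (U x y)^2)
      hU2m.stronglyMeasurable
  have j1 : Integrable (fun x => (Ip p q - c*q^2) + c * (∫ y in I01, (U x y)^2))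
      (volume.restrict I01) :=
    (integrable_const _).add ((integrable_of_bdd hhSM.aestronglyMeasurable
      (fun x => abs_integral_le_of_bdd (fun y => hU2abs x y))).const_mul c)
  have j2 : Integrable (fun x => ∫ y in I01, Ip p (W x y)) (volume.restrict I01) :=
    integrable_of_bdd
      (StronglyMeasurable.integral_prod_right (f := fun x y => Ip p (W x y))
        hImeas.stronglyMeasurable).aestronglyMeasurable
      (fun x => abs_integral_le_of_bdd (fun y => hIb x y))
  have h4 := integral_mono j1 j2 inner_mono
  rw [integral_add (integrable_const _) ((integrable_of_bdd hhSM.aestronglyMeasurable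
      (fun x => abs_integral_le_of_bdd (fun y => hU2abs x y))).const_mul c),
    integral_const, integral_const_mul, probReal_univ, one_smul] at h4
  have h5 : c * q^2 ≤ c * (∫ x in I01, ∫ y in I01, (U x y)^2) :=
    mul_le_mul_of_nonneg_left hkey hc
  calc Ip p q = (Ip p q - c*q^2) + c * q^2 := by ring
    _ ≤ (Ip p q - c*q^2) + c * (∫ x in I01, ∫ y in I01, (U x y)^2) := by linarith
    _ ≤ ∫ x in I01, ∫ y in I01, Ip p (W x y) := h4
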